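/- Let H = H_0 ⋉ D := ((H_0 ∖ H_0^×) × D) ∪ (H_0^× × {1}) as a submonoid of H_0 × D, with D ≠ {1} and H_0 not a group. Then H^× = H_0^× × {1}, the quotient group of H is q(H_0) × q(D), H is not saturated in H_0 × D, the complete integral closure of H equals Ĥ_0 × D̂, and hence H is not a Krull monoid. -/

import Mathlib

/- We model the cancellative commutative monoids `H₀` and `D` as submonoids (given as
subsets closed under `1` and `*`) of their quotient groups `G₁` and `G₂`, and
`H = H₀ ⋉ D = ((H₀ ∖ H₀ˣ) × D) ∪ (H₀ˣ × {1})` as a subset of `G₁ × G₂`.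
An element `a ∈ H₀` is a unit of `H₀` iff `a⁻¹ ∈ H₀`; divisibility in a submonoid `S` of a
group means `b = a * z` with `z ∈ S`; the complete integral closure of `S` (inside the
quotient group) is `{x | ∃ c ∈ S, ∀ n, c * xⁿ ∈ S}`. -/
theorem stmt12 {G₁ G₂ : Type*} [CommGroup G₁] [CommGroup G₂]
    (H₀ : Set G₁) (D : Set G₂)
    (h₀1 : (1 : G₁) ∈ H₀) (h₀m : ∀ a ∈ H₀, ∀ b ∈ H₀, a * b ∈ H₀)
    (hq₁ : ∀ g : G₁, ∃ a ∈ H₀, ∃ b ∈ H₀, g = a * b⁻¹)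
    (hD1 : (1 : G₂) ∈ D) (hDm : ∀ a ∈ D, ∀ b ∈ D, a * b ∈ D)
    (hq₂ : ∀ g : G₂, ∃ a ∈ D, ∃ b ∈ D, g = a * b⁻¹)
    (hDnt : D ≠ {1})
    (hH₀ng : ∃ a ∈ H₀, a⁻¹ ∉ H₀)
    (H : Set (G₁ × G₂))
    (hH : H = {x : G₁ × G₂ | x.1 ∈ H₀ ∧ x.2 ∈ D ∧ (x.1⁻¹ ∈ H₀ → x.2 = 1)}) :
    -- `H^× = H₀^× × {1}`
    (∀ x ∈ H, (x⁻¹ ∈ H ↔ (x.1⁻¹ ∈ H₀ ∧ x.2 = 1))) ∧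
    -- `q(H) = q(H₀) × q(D)`
    (∀ g : G₁ × G₂, ∃ a ∈ H, ∃ b ∈ H, g = a * b⁻¹) ∧
    -- `H ⊆ H₀ × D` is not saturated
    (∃ a ∈ H, ∃ b ∈ H,
      (∃ z : G₁ × G₂, z.1 ∈ H₀ ∧ z.2 ∈ D ∧ b = a * z) ∧ ¬ ∃ z ∈ H, b = a * z) ∧
    -- `Ĥ = Ĥ₀ × D̂`
    ({x : G₁ × G₂ | ∃ c ∈ H, ∀ n : ℕ, c * x ^ n ∈ H} =
      {x : G₁ × G₂ | (∃ c ∈ H₀, ∀ n : ℕ, c * x.1 ^ n ∈ H₀) ∧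
        (∃ c ∈ D, ∀ n : ℕ, c * x.2 ^ n ∈ D)}) ∧
    -- `H` is not completely integrally closed (hence not Krull)
    H ≠ {x : G₁ × G₂ | ∃ c ∈ H, ∀ n : ℕ, c * x ^ n ∈ H} := by
  obtain ⟨u, hu, hu'⟩ := hH₀ng
  obtain ⟨d, hdD, hd1⟩ : ∃ d ∈ D, d ≠ 1 := by
    by_contra h
    push_neg at h
    exact hDnt (Set.eq_singleton_iff_unique_mem.2 ⟨hD1, h⟩)
  subst hH
  have hpowD : ∀ a ∈ D, ∀ n : ℕ, a ^ n ∈ D := by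
    intro a ha n
    induction n with
    | zero => simpa using hD1
    | succ n ih => rw [pow_succ]; exact hDm _ ih _ ha
  have hnonu : ∀ b ∈ H₀, (u * b)⁻¹ ∉ H₀ := by
    intro b hb hc
    apply hu'
    have : (u * b)⁻¹ * b = u⁻¹ := by
      rw [mul_inv_rev, mul_comm b⁻¹, mul_assoc, inv_mul_cancel, mul_one]
    rw [← this]
    exact h₀m _ hc _ hb
  refine ⟨?_, ?_, ?_, ?_, ?_⟩
  · -- units
    intro x hx
    constructor
    · rintro ⟨h1, h2, h3⟩
      refine ⟨h1, ?_⟩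
      have : (x⁻¹).2 = 1 := h3 (by simpa using hx.1)
      simpa [eq_comm] using this
    · rintro ⟨h1, h2⟩
      exact ⟨by simpa using h1, by simp [h2, hD1], fun _ => by simp [h2]⟩
  · -- quotient group
    intro g
    obtain ⟨a₁, ha₁, b₁, hb₁, hg₁⟩ := hq₁ g.1
    obtain ⟨a₂, ha₂, b₂, hb₂, hg₂⟩ := hq₂ g.2
    refine ⟨(u * a₁, a₂), ⟨h₀m _ hu _ ha₁, ha₂, fun hc => absurd hc (hnonu _ ha₁)⟩,
            (u * b₁, b₂), ⟨h₀m _ hu _ hb₁, hb₂, fun hc => absurd hc (hnonu _ hb₁)⟩, ?_⟩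
    refine Prod.ext ?_ ?_
    · show g.1 = u * a₁ * (u * b₁)⁻¹
      rw [hg₁, ← div_eq_mul_inv, ← div_eq_mul_inv, mul_div_mul_left_eq_div]
    · show g.2 = a₂ * b₂⁻¹
      exact hg₂
  · -- not saturated
    refine ⟨(u, 1), ⟨hu, hD1, fun _ => rfl⟩, (u, d), ⟨hu, hdD, fun hc => absurd hc hu'⟩,
      ⟨⟨(1, d), h₀1, hdD, by ext <;> simp⟩, ?_⟩⟩
    rintro ⟨z, ⟨hz1, hz2, hz3⟩, hzeq⟩
    rw [Prod.ext_iff] at hzeq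
    obtain ⟨he1, he2⟩ := hzeq
    have hz1' : z.1 = 1 := by
      have : u = u * z.1 := he1
      exact (mul_eq_left.1 this.symm)
    have hz2' : z.2 = d := by simpa using he2.symm
    exact hd1 (hz2' ▸ hz3 (by simp [hz1', h₀1]))
  · -- complete integral closure
    ext x
    simp only [Set.mem_setOf_eq]
    constructor
    · rintro ⟨c, ⟨hc1, hc2, _⟩, hc⟩
      refine ⟨⟨c.1, hc1, fun n => ?_⟩, ⟨c.2, hc2, fun n => ?_⟩⟩
      · simpa using (hc n).1
      · simpa using (hc n).2.1
    · rintro ⟨⟨c₁, hc₁, h1⟩, ⟨c₂, hc₂, h2⟩⟩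
      refine ⟨(u * c₁, c₂), ⟨h₀m _ hu _ hc₁, hc₂, fun hc => absurd hc (hnonu _ hc₁)⟩,
        fun n => ?_⟩
      refine ⟨?_, ?_, fun hc => ?_⟩
      · show u * c₁ * x.1 ^ n ∈ H₀
        rw [mul_assoc]
        exact h₀m _ hu _ (h1 n)
      · show c₂ * x.2 ^ n ∈ D
        exact h2 n
      · exfalso
        apply hnonu _ (h1 n)
        simpa [mul_assoc] using hc
  · -- not completely integrally closed
    intro heq
    have hmem : (1, d) ∈ {x : G₁ × G₂ | ∃ c ∈ {x : G₁ × G₂ | x.1 ∈ H₀ ∧ x.2 ∈ D ∧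
        (x.1⁻¹ ∈ H₀ → x.2 = 1)}, ∀ n : ℕ, c * x ^ n ∈ {x : G₁ × G₂ | x.1 ∈ H₀ ∧ x.2 ∈ D ∧
        (x.1⁻¹ ∈ H₀ → x.2 = 1)}} := by
      refine ⟨(u, 1), ⟨hu, hD1, fun _ => rfl⟩, fun n => ?_⟩
      refine ⟨by simpa using hu, by simpa using hpowD d hdD n, fun hc => absurd (by simpa using hc) hu'⟩
    rw [← heq] at hmem
    exact hd1 (hmem.2.2 (by simpa using h₀1))
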